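/- arXiv:1309.0643 — 2 statements merged into one kernel-verified Lean document; each statement's English description precedes it below -/
import Mathlib

section
/- Let G be a connected graph of order n ≥ 2 and let H be a connected graph with at least two vertices such that ∂(H) = σ(H), and let v be a vertex of H. (i) If v ∈ ∂(H), then dim_s(G∘_v H) = n(|∂(H)| − 1) − 1. (ii) If v ∉ ∂(H), then dim_s(G∘_v H) = n|∂(H)| − 1. -/
namespace RootedStrong

variable {V : Type*}

/-- `u` is maximally distant from `v`: every neighbor `w` of `u` satisfies `d(v,w) ≤ d(u,v)`. -/
def MaxDistant (G : SimpleGraph V) (u v : V) : Prop :=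
  ∀ w, G.Adj u w → G.dist v w ≤ G.dist u v

/-- `u` and `v` are mutually maximally distant. -/
def MMD (G : SimpleGraph V) (u v : V) : Prop :=
  MaxDistant G u v ∧ MaxDistant G v u

/-- The boundary `∂(G)` of a graph. -/
def boundary (G : SimpleGraph V) : Set V := {u | ∃ v, MMD G u v}

/-- A vertex is simplicial if its neighborhood induces a complete graph. -/
def Simplicial (G : SimpleGraph V) (u : V) : Prop :=
  ∀ x ∈ G.neighborSet u, ∀ y ∈ G.neighborSet u, x ≠ y → G.Adj x y

/-- The set `σ(G)` of simplicial vertices. -/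
def simplicialSet (G : SimpleGraph V) : Set V := {u | Simplicial G u}

/-- `w` strongly resolves `u` and `v`. -/
def StronglyResolves (G : SimpleGraph V) (w u v : V) : Prop :=
  G.dist w u = G.dist w v + G.dist v u ∨ G.dist w v = G.dist w u + G.dist u v

/-- A set of vertices is a strong metric generator if every pair of distinct vertices is
strongly resolved by some of its elements. -/
def IsStrongGenerator (G : SimpleGraph V) (S : Set V) : Prop :=
  ∀ u v : V, u ≠ v → ∃ w ∈ S, StronglyResolves G w u v

/-- The strong metric dimension of a graph. -/
noncomputable def sdim (G : SimpleGraph V) [Fintype V] : ℕ :=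
  sInf {n | ∃ S : Finset V, S.card = n ∧ IsStrongGenerator G (S : Set V)}

/-- A strong metric basis: a strong metric generator of minimum cardinality. -/
def IsStrongBasis (G : SimpleGraph V) [Fintype V] (S : Finset V) : Prop :=
  IsStrongGenerator G (S : Set V) ∧ S.card = sdim G

/-- The rooted product graph `G ∘_v H`. -/
def rootedProd {α β : Type*} (G : SimpleGraph α) (H : SimpleGraph β) (v : β) :
    SimpleGraph (α × β) where
  Adj p q := (p.1 = q.1 ∧ H.Adj p.2 q.2) ∨ (p.2 = v ∧ q.2 = v ∧ G.Adj p.1 q.1)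
  symm := by
    constructor
    rintro ⟨a, x⟩ ⟨b, y⟩ (⟨h1, h2⟩ | ⟨h1, h2, h3⟩)
    · exact Or.inl ⟨h1.symm, h2.symm⟩
    · exact Or.inr ⟨h2, h1, h3.symm⟩
  loopless := by
    constructor
    rintro ⟨a, x⟩ (⟨_, h2⟩ | ⟨_, _, h3⟩)
    · exact H.loopless.irrefl _ h2
    · exact G.loopless.irrefl _ h3

/-- Two distinct vertices are true twins if they have equal closed neighborhoods. -/
def TrueTwins (G : SimpleGraph V) (x y : V) : Prop :=
  x ≠ y ∧ ∀ z, (z = x ∨ G.Adj x z) ↔ (z = y ∨ G.Adj y z)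

/-- A twin-free clique: a clique containing no pair of true twins. -/
def IsTwinFreeClique (G : SimpleGraph V) (X : Set V) : Prop :=
  (∀ x ∈ X, ∀ y ∈ X, x ≠ y → G.Adj x y) ∧ ∀ x ∈ X, ∀ y ∈ X, ¬ TrueTwins G x y

/-- The twin-free clique number `ϖ(G)`. -/
noncomputable def twinFreeCliqueNum (G : SimpleGraph V) : ℕ :=
  sSup {n | ∃ X : Set V, IsTwinFreeClique G X ∧ X.ncard = n}


open SimpleGraph


lemma dc (G : SimpleGraph V) (a b : V) : G.dist a b = G.dist b a := SimpleGraph.dist_comm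

section General
variable {G : SimpleGraph V} (hG : G.Connected) [Fintype V]

/-- penultimate vertex: if x ≠ y there is a neighbor p of x with d(y,p) = d(y,x) - 1 -/
lemma exists_penultimate (hG : G.Connected) {x y : V} (hxy : x ≠ y) :
    ∃ p, G.Adj x p ∧ G.dist y p + 1 = G.dist y x := by
  obtain ⟨w, hw⟩ := hG.exists_walk_length_eq_dist x y
  cases w with
  | nil => exact absurd rfl hxy
  | @cons _ p _ h q =>
    refine ⟨p, h, ?_⟩
    have h1 : G.dist x y = q.length + 1 := by simpa [Nat.add_comm] using hw.symm
    have h2 : G.dist p y ≤ q.length := dist_le q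
    have h3 : G.dist x y ≤ G.dist x p + G.dist p y := hG.dist_triangle
    have h4 : G.dist x p ≤ 1 := by
      have := dist_le h.toWalk
      simpa using this
    rw [dc G y p, dc G y x]
    omega

/-- climbing lemma -/
lemma exists_maxDistant_beyond (hG : G.Connected) (x y : V) :
    ∃ u, MaxDistant G u x ∧ G.dist x u = G.dist x y + G.dist y u := by
  classical
  by_cases hcard : Nontrivial V
  · -- strong induction on Fintype.card V - dist x y
    suffices H : ∀ k y, Fintype.card V - G.dist x y ≤ k →
        ∃ u, MaxDistant G u x ∧ G.dist x u = G.dist x y + G.dist y u by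
      exact H (Fintype.card V) y (Nat.sub_le _ _)
    intro k
    induction k with
    | zero =>
      intro y hy
      exfalso
      have : G.dist x y < Fintype.card V := by
        obtain ⟨w, hw⟩ := hG.exists_walk_length_eq_dist x y
        have := (w.isPath_of_length_eq_dist hw).length_lt
        omega
      omega
    | succ k ih =>
      intro y hy
      by_cases hmax : MaxDistant G y x
      · exact ⟨y, hmax, by simp⟩
      · simp only [MaxDistant, not_forall] at hmax
        obtain ⟨w, hadj, hgt⟩ := hmax
        push_neg at hgt
        have hle : G.dist x w ≤ G.dist x y + 1 := by
          have h3 : G.dist x w ≤ G.dist x y + G.dist y w := hG.dist_triangle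
          have h4 : G.dist y w ≤ 1 := by simpa using dist_le hadj.toWalk
          omega
        rw [dc G y x] at hgt
        have hdw : G.dist x w = G.dist x y + 1 := by omega
        obtain ⟨u, hu1, hu2⟩ := ih w (by omega)
        refine ⟨u, hu1, ?_⟩
        have h5 : G.dist y u ≤ 1 + G.dist w u := by
          have := hG.dist_triangle (u := y) (v := w) (w := u)
          have h4 : G.dist y w ≤ 1 := by simpa using dist_le hadj.toWalk
          omega
        have h6 : G.dist x u ≤ G.dist x y + G.dist y u := hG.dist_triangle
        omega
  · have : ∀ a b : V, a = b := by
      intro a b; by_contra hne; exact hcard ⟨a, b, hne⟩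
    refine ⟨x, ?_, by simp [this y x]⟩
    intro w hw; exact absurd (this x w) hw.ne

lemma maxDistant_mmd (hG : G.Connected) {u x : V} (h : MaxDistant G u x) :
    ∃ x', MMD G u x' ∧ G.dist u x' = G.dist u x + G.dist x x' := by
  obtain ⟨x', hx'1, hx'2⟩ := exists_maxDistant_beyond hG u x
  refine ⟨x', ⟨?_, hx'1⟩, hx'2⟩
  intro w hw
  have h1 : G.dist x' w ≤ G.dist x' x + G.dist x w := hG.dist_triangle
  have h2 : G.dist x w ≤ G.dist u x := h w hw
  rw [dc G u x'] at hx'2 ⊢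
  rw [dc G x' x] at h1
  omega

lemma maxDistant_mem_boundary (hG : G.Connected) {u x : V} (h : MaxDistant G u x) :
    u ∈ boundary G := by
  obtain ⟨x', hx', _⟩ := maxDistant_mmd hG h
  exact ⟨x', hx'⟩

/-- simplicial vertices are maximally distant from every other vertex -/
lemma Simplicial.maxDistant (hG : G.Connected) {u : V} (hs : Simplicial G u) (y : V)
    (hy : y ≠ u) : MaxDistant G u y := by
  intro w hw
  rw [dc G u y]
  obtain ⟨p, hp, hpd⟩ := exists_penultimate hG (x := u) (y := y) (fun h => hy h.symm)
  by_cases hpw : p = w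
  · subst hpw; omega
  · have hadj : G.Adj p w := hs p hp w hw hpw
    have : G.dist y w ≤ G.dist y p + G.dist p w := hG.dist_triangle
    have h4 : G.dist p w ≤ 1 := by simpa using dist_le hadj.toWalk
    omega

/-- only endpoints strongly resolve an MMD pair -/
lemma mmd_resolver (hG : G.Connected) {u v w : V} (h : MMD G u v)
    (hr : StronglyResolves G w u v) : w = u ∨ w = v := by
  rcases hr with hr | hr
  · -- d(w,u) = d(w,v) + d(v,u) : then w = v
    by_cases hwv : w = v
    · exact Or.inr hwv
    · exfalso
      obtain ⟨p, hp, hpd⟩ := exists_penultimate hG (x := v) (y := w) (fun h' => hwv h'.symm)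
      -- d(w,p) + 1 = d(w,v), p ~ v
      have h1 : G.dist w u ≤ G.dist w p + G.dist p u := hG.dist_triangle
      have h2 : G.dist u p ≤ G.dist v u := h.2 p hp
      rw [dc G u p] at h2
      have h3 : G.dist v u ≥ 1 := by
        by_contra hc
        push_neg at hc
        have : G.dist v u = 0 := by omega
        have hvu : v = u := (hG.dist_eq_zero_iff).mp this
        subst hvu
        simp at hr
        omega
      omega
  · by_cases hwu : w = u
    · exact Or.inl hwu
    · exfalso
      obtain ⟨p, hp, hpd⟩ := exists_penultimate hG (x := u) (y := w) (fun h' => hwu h'.symm)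
      have h1 : G.dist w v ≤ G.dist w p + G.dist p v := hG.dist_triangle
      have h2 : G.dist v p ≤ G.dist u v := h.1 p hp
      rw [dc G v p] at h2
      have h3 : G.dist u v ≥ 1 := by
        by_contra hc
        push_neg at hc
        have : G.dist u v = 0 := by omega
        have huv : u = v := (hG.dist_eq_zero_iff).mp this
        subst huv
        simp at hr
        omega
      omega

/-- boundary has at least two elements when card ≥ 2 -/
lemma boundary_nontrivial (hG : G.Connected) (h2 : 2 ≤ Fintype.card V) :
    ∃ u w, u ∈ boundary G ∧ w ∈ boundary G ∧ u ≠ w := by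
  obtain ⟨x, y, hxy⟩ := Fintype.exists_pair_of_one_lt_card h2
  obtain ⟨u, hu1, hu2⟩ := exists_maxDistant_beyond hG x y
  obtain ⟨x', hx', hd⟩ := maxDistant_mmd hG hu1
  have hxu : 1 ≤ G.dist x u := by
    have := hG.pos_dist_of_ne hxy
    omega
  have hux' : 1 ≤ G.dist u x' := by
    rw [dc G u x] at hd
    omega
  refine ⟨u, x', maxDistant_mem_boundary hG hu1, ⟨u, hx'.2, hx'.1⟩, ?_⟩
  intro he
  rw [he, SimpleGraph.dist_self] at hux'
  omega

end General


section Product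
variable {α β : Type*} (G : SimpleGraph α) (H : SimpleGraph β) (v : β)

def homH (a : α) : H →g rootedProd G H v where
  toFun x := (a, x)
  map_rel' h := Or.inl ⟨rfl, h⟩

def homG : G →g rootedProd G H v where
  toFun c := (c, v)
  map_rel' h := Or.inr ⟨rfl, rfl, h⟩

open scoped Classical in
/-- the claimed distance function on the rooted product -/
noncomputable def pd (p q : α × β) : ℕ :=
  if p.1 = q.1 then H.dist p.2 q.2 else H.dist p.2 v + G.dist p.1 q.1 + H.dist v q.2

lemma pd_root (a : α) (x : β) (c : α) : pd G H v (a, x) (c, v) = H.dist x v + G.dist a c := by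
  unfold pd
  by_cases h : a = c
  · subst h; simp [SimpleGraph.dist_self]
  · simp [h]

lemma pd_self (p : α × β) : pd G H v p p = 0 := by simp [pd, SimpleGraph.dist_self]

variable {G H}

lemma exists_walk_pd (hG : G.Connected) (hH : H.Connected) (p q : α × β) :
    ∃ w : (rootedProd G H v).Walk p q, w.length = pd G H v p q := by
  obtain ⟨a, x⟩ := p
  obtain ⟨b, y⟩ := q
  by_cases hab : a = b
  · subst hab
    obtain ⟨w, hw⟩ := hH.exists_walk_length_eq_dist x y
    refine ⟨w.map (homH G H v a), ?_⟩
    simp [SimpleGraph.Walk.length_map, hw, pd]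
    exact (SimpleGraph.Walk.length_map (f := homH G H v a) (p := w)).trans hw
  · obtain ⟨w1, hw1⟩ := hH.exists_walk_length_eq_dist x v
    obtain ⟨w2, hw2⟩ := hG.exists_walk_length_eq_dist a b
    obtain ⟨w3, hw3⟩ := hH.exists_walk_length_eq_dist v y
    refine ⟨((w1.map (homH G H v a)).append (w2.map (homG G H v))).append
      (w3.map (homH G H v b)), ?_⟩
    simp [SimpleGraph.Walk.length_append, SimpleGraph.Walk.length_map, hw1, hw2, hw3, pd, hab]
    exact ((SimpleGraph.Walk.length_append _ _).trans (congrArg₂ (· + ·)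
      (SimpleGraph.Walk.length_append _ _) rfl)).trans (congrArg₂ (· + ·) (congrArg₂ (· + ·)
      ((SimpleGraph.Walk.length_map (f := homH G H v a) (p := w1)).trans hw1)
      ((SimpleGraph.Walk.length_map (f := homG G H v) (p := w2)).trans hw2))
      ((SimpleGraph.Walk.length_map (f := homH G H v b) (p := w3)).trans hw3))

lemma rootedProd_connected (hG : G.Connected) (hH : H.Connected) :
    (rootedProd G H v).Connected := by
  have hne : Nonempty (α × β) := ⟨(hG.nonempty.some, hH.nonempty.some)⟩
  refine ⟨fun p q => ?_⟩
  obtain ⟨w, _⟩ := exists_walk_pd v hG hH p q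
  exact ⟨w⟩

lemma lipschitz_le_walk {W : Type*} {P : SimpleGraph W} (f : W → ℕ)
    (hf : ∀ a b, P.Adj a b → f b ≤ f a + 1) {p q : W} (w : P.Walk p q) :
    f q ≤ f p + w.length := by
  induction w with
  | nil => simp
  | cons h w ih =>
    have := hf _ _ h
    simp only [SimpleGraph.Walk.length_cons]
    omega

lemma pd_lipschitz (hG : G.Connected) (hH : H.Connected) (p : α × β) :
    ∀ q q', (rootedProd G H v).Adj q q' → pd G H v p q' ≤ pd G H v p q + 1 := by
  obtain ⟨a, x⟩ := p
  rintro ⟨c, z⟩ ⟨c', z'⟩ (⟨h1, h2⟩ | ⟨h1, h2, h3⟩)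
  · simp only at h1 h2
    subst h1
    have hzz : H.dist z z' ≤ 1 := by simpa using SimpleGraph.dist_le h2.toWalk
    by_cases hac : a = c
    · subst hac
      have := hH.dist_triangle (u := x) (v := z) (w := z')
      simp only [pd, if_true]
      omega
    · have h4 : H.dist v z' ≤ H.dist v z + 1 := by
        have := hH.dist_triangle (u := v) (v := z) (w := z')
        omega
      simp only [pd]
      rw [if_neg hac, if_neg hac]
      omega
  · simp only at h1 h2
    subst h1; subst h2
    rw [pd_root, pd_root]
    have hcc : G.dist c c' ≤ 1 := by simpa using SimpleGraph.dist_le h3.toWalk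
    have := hG.dist_triangle (u := a) (v := c) (w := c')
    omega

theorem rootedProd_dist (hG : G.Connected) (hH : H.Connected) (p q : α × β) :
    (rootedProd G H v).dist p q = pd G H v p q := by
  apply le_antisymm
  · obtain ⟨w, hw⟩ := exists_walk_pd v hG hH p q
    simpa [hw] using SimpleGraph.dist_le w
  · obtain ⟨w, hw⟩ := (rootedProd_connected v hG hH).exists_walk_length_eq_dist p q
    have := lipschitz_le_walk (f := pd G H v p) (pd_lipschitz v hG hH p) w
    rw [hw] at this
    simpa [pd_self] using this

end Product

section Main
variable {α β : Type*} [Fintype α] [Fintype β]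
variable {G : SimpleGraph α} {H : SimpleGraph β} {v : β}

local notation "P" => rootedProd G H v

lemma Pdist_same (hG : G.Connected) (hH : H.Connected) (a : α) (x y : β) :
    (P).dist (a, x) (a, y) = H.dist x y := by
  rw [rootedProd_dist v hG hH]
  simp [pd]

lemma Pdist_ne (hG : G.Connected) (hH : H.Connected) {a b : α} (hab : a ≠ b) (x y : β) :
    (P).dist (a, x) (b, y) = H.dist x v + G.dist a b + H.dist v y := by
  rw [rootedProd_dist v hG hH]
  simp [pd, hab]

lemma Pdist_rootr (hG : G.Connected) (hH : H.Connected) (a b : α) (x : β) :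
    (P).dist (a, x) (b, v) = H.dist x v + G.dist a b := by
  rw [rootedProd_dist v hG hH, pd_root]

lemma Pdist_rootl (hG : G.Connected) (hH : H.Connected) (a b : α) (x : β) :
    (P).dist (a, v) (b, x) = G.dist a b + H.dist v x := by
  by_cases hab : a = b
  · subst hab
    rw [Pdist_same hG hH, SimpleGraph.dist_self]
    omega
  · rw [Pdist_ne hG hH hab, SimpleGraph.dist_self]
    omega

/-- climbing in H towards the boundary -/
lemma climbH (hH : H.Connected) (x y : β) :
    ∃ u ∈ boundary H, H.dist x u = H.dist x y + H.dist y u := by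
  obtain ⟨u, h1, h2⟩ := exists_maxDistant_beyond hH x y
  exact ⟨u, maxDistant_mem_boundary hH h1, h2⟩

/-- simplicial vertices of H away from the root give simplicial vertices of the product -/
lemma prod_simplicial {x : β} (hx : Simplicial H x) (hxv : x ≠ v) (a : α) :
    Simplicial (P) (a, x) := by
  rintro ⟨c, z⟩ hz ⟨c', z'⟩ hz' hne
  simp only [SimpleGraph.mem_neighborSet] at hz hz'
  rcases hz with ⟨h1, h2⟩ | ⟨h1, _⟩
  · rcases hz' with ⟨h1', h2'⟩ | ⟨h1', _⟩
    · simp only at h1 h1' h2 h2'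
      subst h1; subst h1'
      have hzz : z ≠ z' := by
        intro hc; exact hne (by rw [hc])
      exact Or.inl ⟨rfl, hx z h2 z' h2' hzz⟩
    · exact absurd h1' hxv
  · exact absurd h1 hxv

lemma prod_mmd (hG : G.Connected) (hH : H.Connected) {x y : β}
    (hx : Simplicial H x) (hxv : x ≠ v) (hy : Simplicial H y) (hyv : y ≠ v)
    {a b : α} (hne : (a, x) ≠ (b, y)) : MMD (P) (a, x) (b, y) := by
  have hP : (P).Connected := rootedProd_connected v hG hH
  exact ⟨Simplicial.maxDistant hP (prod_simplicial hx hxv a) _ (Ne.symm hne),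
    Simplicial.maxDistant hP (prod_simplicial hy hyv b) _ hne⟩

/-- two distinct resolvers in V(G) × (∂(H) \ {v}) for every pair -/
lemma two_resolvers (hG : G.Connected) (hH : H.Connected)
    (h2 : 2 ≤ Fintype.card α) (hD : ((boundary H) \ {v}).Nonempty)
    (p q : α × β) (hpq : p ≠ q) :
    ∃ w1 w2 : α × β, w1.2 ∈ boundary H \ {v} ∧ w2.2 ∈ boundary H \ {v} ∧ w1 ≠ w2 ∧
      StronglyResolves (P) w1 p q ∧ StronglyResolves (P) w2 p q := by
  obtain ⟨a, x⟩ := p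
  obtain ⟨b, y⟩ := q
  obtain ⟨u0, hu0⟩ := hD
  have hvv : H.dist v v = 0 := SimpleGraph.dist_self
  by_cases hab : a = b
  · -- same copy
    subst hab
    have hxy : x ≠ y := by
      intro hc; exact hpq (by rw [hc])
    obtain ⟨u, hub, hue⟩ := climbH hH x y
    obtain ⟨u2, hu2b, hu2e⟩ := climbH hH y x
    have hxyd : 1 ≤ H.dist x y := hH.pos_dist_of_ne hxy
    have e1 : (P).dist (a, u) (a, x) = H.dist u x := Pdist_same hG hH a u x
    have e2 : (P).dist (a, u) (a, y) = H.dist u y := Pdist_same hG hH a u y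
    have e3 : (P).dist (a, y) (a, x) = H.dist y x := Pdist_same hG hH a y x
    have e4 : (P).dist (a, u2) (a, x) = H.dist u2 x := Pdist_same hG hH a u2 x
    have e5 : (P).dist (a, u2) (a, y) = H.dist u2 y := Pdist_same hG hH a u2 y
    have e6 : (P).dist (a, x) (a, y) = H.dist x y := Pdist_same hG hH a x y
    have c1 := dc H u x
    have c2 := dc H u y
    have c3 := dc H y x
    have c4 := dc H u2 x
    have c5 := dc H u2 y
    have hres1 : u ≠ v → StronglyResolves (P) (a, u) (a, x) (a, y) := by
      intro _; left; omega
    have hres2 : u2 ≠ v → StronglyResolves (P) (a, u2) (a, x) (a, y) := by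
      intro _; right; omega
    have huu2 : ¬(u = v ∧ u2 = v) := by
      rintro ⟨rfl, hh⟩
      rw [hh] at hu2e
      omega
    obtain ⟨c, hc⟩ : ∃ c : α, c ≠ a := by
      obtain ⟨s, t, hst⟩ := Fintype.exists_pair_of_one_lt_card h2
      by_cases hsa : s = a
      · exact ⟨t, by rw [← hsa]; exact Ne.symm hst⟩
      · exact ⟨s, hsa⟩
    have f1 : (P).dist (c, u0) (a, x) = H.dist u0 v + G.dist c a + H.dist v x :=
      Pdist_ne hG hH hc u0 x
    have f2 : (P).dist (c, u0) (a, y) = H.dist u0 v + G.dist c a + H.dist v y :=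
      Pdist_ne hG hH hc u0 y
    have c6 := dc H x v
    have c7 := dc H y v
    have hresf : u = v → StronglyResolves (P) (c, u0) (a, x) (a, y) := by
      intro huv; rw [huv] at hue; left; omega
    have hresf2 : u2 = v → StronglyResolves (P) (c, u0) (a, x) (a, y) := by
      intro huv; rw [huv] at hu2e; right; omega
    by_cases huv : u = v
    · have hu2v : u2 ≠ v := fun h => huu2 ⟨huv, h⟩
      refine ⟨(a, u2), (c, u0), ⟨hu2b, hu2v⟩, hu0, ?_, hres2 hu2v, hresf huv⟩
      intro he
      exact hc (congrArg Prod.fst he).symm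
    · by_cases hu2v : u2 = v
      · refine ⟨(a, u), (c, u0), ⟨hub, huv⟩, hu0, ?_, hres1 huv, hresf2 hu2v⟩
        intro he
        exact hc (congrArg Prod.fst he).symm
      · refine ⟨(a, u), (a, u2), ⟨hub, huv⟩, ⟨hu2b, hu2v⟩, ?_, hres1 huv, hres2 hu2v⟩
        intro he
        have huu : u = u2 := congrArg Prod.snd he
        rw [← huu] at hu2e
        omega
  · -- different copies
    have habd : 1 ≤ G.dist a b := hG.pos_dist_of_ne hab
    by_cases hxv : x = v
    · by_cases hyv : y = v
      · -- both roots
        rw [hxv, hyv]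
        obtain ⟨c, _, hce⟩ := exists_maxDistant_beyond hG a b
        obtain ⟨c2, _, hc2e⟩ := exists_maxDistant_beyond hG b a
        have e1 : (P).dist (c, u0) (a, v) = G.dist c a + H.dist v u0 := by
          rw [dc (P) (c, u0) (a, v), Pdist_rootl hG hH, dc G a c]
        have e2 : (P).dist (c, u0) (b, v) = G.dist c b + H.dist v u0 := by
          rw [dc (P) (c, u0) (b, v), Pdist_rootl hG hH, dc G b c]
        have e3 : (P).dist (c2, u0) (a, v) = G.dist c2 a + H.dist v u0 := by
          rw [dc (P) (c2, u0) (a, v), Pdist_rootl hG hH, dc G a c2]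
        have e4 : (P).dist (c2, u0) (b, v) = G.dist c2 b + H.dist v u0 := by
          rw [dc (P) (c2, u0) (b, v), Pdist_rootl hG hH, dc G b c2]
        have e5 : (P).dist (a, v) (b, v) = G.dist a b := by
          rw [Pdist_rootl hG hH]; omega
        have e6 : (P).dist (b, v) (a, v) = G.dist b a := by
          rw [Pdist_rootl hG hH]; omega
        have c1 := dc G c a
        have c2' := dc G c b
        have c3 := dc G c2 a
        have c4 := dc G c2 b
        have c5 := dc G a b
        refine ⟨(c, u0), (c2, u0), hu0, hu0, ?_, ?_, ?_⟩
        · intro he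
          have hcc : c = c2 := congrArg Prod.fst he
          rw [← hcc] at hc2e
          omega
        · left; omega
        · right; omega
      · -- x = v, y ≠ v
        rw [hxv]
        obtain ⟨u, hub, hue⟩ := climbH hH v y
        have huv : u ≠ v := by
          intro hc
          rw [hc, SimpleGraph.dist_self] at hue
          have : H.dist v y = 0 := by omega
          exact hyv ((hH.dist_eq_zero_iff).mp this).symm
        obtain ⟨c, _, hce⟩ := exists_maxDistant_beyond hG b a
        have hcb : c ≠ b := by
          intro hc
          rw [hc, SimpleGraph.dist_self] at hce
          have : G.dist b a = 0 := by omega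
          exact hab ((hG.dist_eq_zero_iff).mp this).symm
        have e1 : (P).dist (b, u) (a, v) = H.dist u v + G.dist b a :=
          Pdist_rootr hG hH b a u
        have e2 : (P).dist (b, u) (b, y) = H.dist u y := Pdist_same hG hH b u y
        have e3 : (P).dist (a, v) (b, y) = G.dist a b + H.dist v y :=
          Pdist_rootl hG hH a b y
        have e4 : (P).dist (b, y) (a, v) = H.dist y v + G.dist b a :=
          Pdist_rootr hG hH b a y
        have f1 : (P).dist (c, u0) (a, v) = H.dist u0 v + G.dist c a + H.dist v v := by
          by_cases hca : c = a
          · rw [hca, Pdist_same hG hH, SimpleGraph.dist_self, dc H u0 v]; omega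
          · exact Pdist_ne hG hH hca u0 v
        have f2 : (P).dist (c, u0) (b, y) = H.dist u0 v + G.dist c b + H.dist v y :=
          Pdist_ne hG hH hcb u0 y
        have c1 := dc G a b
        have c2 := dc H u v
        have c3 := dc H y v
        have c4 := dc G c a
        have c5 := dc G c b
        have c6 := dc H u y
        refine ⟨(b, u), (c, u0), ⟨hub, huv⟩, hu0, ?_, ?_, ?_⟩
        · intro he
          exact hcb (congrArg Prod.fst he).symm
        · left; omega
        · right; omega
    · by_cases hyv : y = v
      · -- x ≠ v, y = v
        rw [hyv]
        obtain ⟨u2, hu2b, hu2e⟩ := climbH hH v x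
        have hu2v : u2 ≠ v := by
          intro hc
          rw [hc, SimpleGraph.dist_self] at hu2e
          have : H.dist v x = 0 := by omega
          exact hxv ((hH.dist_eq_zero_iff).mp this).symm
        obtain ⟨c, _, hce⟩ := exists_maxDistant_beyond hG a b
        have hca : c ≠ a := by
          intro hc
          rw [hc, SimpleGraph.dist_self] at hce
          have : G.dist a b = 0 := by omega
          exact hab ((hG.dist_eq_zero_iff).mp this)
        have e1 : (P).dist (a, u2) (a, x) = H.dist u2 x := Pdist_same hG hH a u2 x
        have e2 : (P).dist (a, u2) (b, v) = H.dist u2 v + G.dist a b :=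
          Pdist_rootr hG hH a b u2
        have e3 : (P).dist (b, v) (a, x) = G.dist b a + H.dist v x :=
          Pdist_rootl hG hH b a x
        have e4 : (P).dist (a, x) (b, v) = H.dist x v + G.dist a b :=
          Pdist_rootr hG hH a b x
        have f1 : (P).dist (c, u0) (a, x) = H.dist u0 v + G.dist c a + H.dist v x :=
          Pdist_ne hG hH hca u0 x
        have f2 : (P).dist (c, u0) (b, v) = H.dist u0 v + G.dist c b + H.dist v v := by
          by_cases hcb : c = b
          · rw [hcb, Pdist_same hG hH, SimpleGraph.dist_self, dc H u0 v]; omega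
          · exact Pdist_ne hG hH hcb u0 v
        have c1 := dc G a b
        have c2 := dc H u2 v
        have c3 := dc H x v
        have c4 := dc G c a
        have c5 := dc G c b
        have c6 := dc H u2 x
        refine ⟨(a, u2), (c, u0), ⟨hu2b, hu2v⟩, hu0, ?_, ?_, ?_⟩
        · intro he
          exact hca (congrArg Prod.fst he).symm
        · right; omega
        · left; omega
      · -- x ≠ v, y ≠ v
        obtain ⟨u, hub, hue⟩ := climbH hH v y
        have huv : u ≠ v := by
          intro hc
          rw [hc, SimpleGraph.dist_self] at hue
          have : H.dist v y = 0 := by omega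
          exact hyv ((hH.dist_eq_zero_iff).mp this).symm
        obtain ⟨u2, hu2b, hu2e⟩ := climbH hH v x
        have hu2v : u2 ≠ v := by
          intro hc
          rw [hc, SimpleGraph.dist_self] at hu2e
          have : H.dist v x = 0 := by omega
          exact hxv ((hH.dist_eq_zero_iff).mp this).symm
        have e1 : (P).dist (b, u) (a, x) = H.dist u v + G.dist b a + H.dist v x :=
          Pdist_ne hG hH (Ne.symm hab) u x
        have e2 : (P).dist (b, u) (b, y) = H.dist u y := Pdist_same hG hH b u y
        have e3 : (P).dist (a, x) (b, y) = H.dist x v + G.dist a b + H.dist v y :=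
          Pdist_ne hG hH hab x y
        have e4 : (P).dist (a, u2) (a, x) = H.dist u2 x := Pdist_same hG hH a u2 x
        have e5 : (P).dist (a, u2) (b, y) = H.dist u2 v + G.dist a b + H.dist v y :=
          Pdist_ne hG hH hab u2 y
        have e6 : (P).dist (b, y) (a, x) = H.dist y v + G.dist b a + H.dist v x :=
          Pdist_ne hG hH (Ne.symm hab) y x
        have c1 := dc G a b
        have c2 := dc H u v
        have c3 := dc H u2 v
        have c4 := dc H x v
        have c5 := dc H y v
        have c6 := dc H u y
        have c7 := dc H u2 x
        refine ⟨(b, u), (a, u2), ⟨hub, huv⟩, ⟨hu2b, hu2v⟩, ?_, ?_, ?_⟩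
        · intro he
          exact (Ne.symm hab) (congrArg Prod.fst he)
        · left; omega
        · right; omega

end Main

section Final
variable {α β : Type*} [Fintype α] [Fintype β]
variable {G : SimpleGraph α} {H : SimpleGraph β} {v : β}

local notation "P" => rootedProd G H v

lemma sdim_prod (hG : G.Connected) (hH : H.Connected) (h2 : 2 ≤ Fintype.card α)
    (hbs : boundary H = simplicialSet H) (hD : ((boundary H) \ {v}).Nonempty) :
    sdim (P) = Fintype.card α * ((boundary H) \ {v}).ncard - 1 := by
  classical
  have hP : (P).Connected := rootedProd_connected v hG hH
  set Dv : Set β := (boundary H) \ {v} with hDv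
  set Sfin : Finset (α × β) := Finset.univ ×ˢ Dv.toFinset with hSfin
  have hmem : ∀ p : α × β, p ∈ Sfin ↔ p.2 ∈ Dv := by
    intro p
    simp [hSfin, Set.mem_toFinset]
  have hcard : Sfin.card = Fintype.card α * Dv.ncard := by
    rw [hSfin, Finset.card_product, Finset.card_univ, Set.ncard_eq_toFinset_card']
  have hmmd : ∀ p ∈ Sfin, ∀ q ∈ Sfin, p ≠ q → MMD (P) p q := by
    rintro ⟨a, x⟩ hp ⟨b, y⟩ hq hpq
    have hx := (hmem _).mp hp
    have hy := (hmem _).mp hq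
    have hx1 : Simplicial H x := by
      have : x ∈ simplicialSet H := hbs ▸ hx.1
      exact this
    have hy1 : Simplicial H y := by
      have : y ∈ simplicialSet H := hbs ▸ hy.1
      exact this
    exact prod_mmd hG hH hx1 hx.2 hy1 hy.2 hpq
  obtain ⟨u0, hu0⟩ := hD
  have a0 : α := hG.nonempty.some
  have hz0 : (a0, u0) ∈ Sfin := (hmem _).mpr hu0
  set T : Finset (α × β) := Sfin.erase (a0, u0) with hT
  have hTgen : IsStrongGenerator (P) (T : Set (α × β)) := by
    intro p q hpq
    obtain ⟨w1, w2, h1, h2', hne, hr1, hr2⟩ := two_resolvers hG hH h2 ⟨u0, hu0⟩ p q hpq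
    by_cases h : w1 = (a0, u0)
    · refine ⟨w2, ?_, hr2⟩
      have : w2 ∈ T := Finset.mem_erase.mpr ⟨by rw [← h]; exact Ne.symm hne, (hmem _).mpr h2'⟩
      exact this
    · refine ⟨w1, ?_, hr1⟩
      have : w1 ∈ T := Finset.mem_erase.mpr ⟨h, (hmem _).mpr h1⟩
      exact this
  have hTcard : T.card = Sfin.card - 1 := Finset.card_erase_of_mem hz0
  have hmemS : Sfin.card - 1 ∈
      {n | ∃ S : Finset (α × β), S.card = n ∧ IsStrongGenerator (P) (S : Set (α × β))} :=
    ⟨T, hTcard, hTgen⟩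
  have hlb : ∀ m ∈
      {n | ∃ S : Finset (α × β), S.card = n ∧ IsStrongGenerator (P) (S : Set (α × β))},
      Sfin.card - 1 ≤ m := by
    rintro m ⟨S, rfl, hSgen⟩
    have hsdiff : (Sfin \ S).card ≤ 1 := by
      by_contra hgt
      push_neg at hgt
      have h10 : 1 < (Sfin \ S).card := by omega
      obtain ⟨p, hp, q, hq, hpq⟩ := Finset.one_lt_card.mp h10
      have hp' := Finset.mem_sdiff.mp hp
      have hq' := Finset.mem_sdiff.mp hq
      obtain ⟨w, hw, hr⟩ := hSgen p q hpq
      rcases mmd_resolver hP (hmmd p hp'.1 q hq'.1 hpq) hr with rfl | rfl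
      · exact hp'.2 hw
      · exact hq'.2 hw
    have h5 := Finset.card_sdiff_add_card_inter Sfin S
    have h6 : (Sfin ∩ S).card ≤ S.card := Finset.card_le_card Finset.inter_subset_right
    omega
  rw [sdim, ← hcard]
  exact le_antisymm (Nat.sInf_le hmemS) (le_csInf ⟨_, hmemS⟩ hlb)

end Final

theorem statement5 {α β : Type*} [Fintype α] [Fintype β]
    (G : SimpleGraph α) (H : SimpleGraph β)
    (hG : G.Connected) (hH : H.Connected)
    {n : ℕ} (hn : Fintype.card α = n) (h2 : 2 ≤ n) (hHn : 2 ≤ Fintype.card β)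
    (hbs : boundary H = simplicialSet H) (v : β) :
    (v ∈ boundary H →
      (sdim (rootedProd G H v) : ℤ) = n * (((boundary H).ncard : ℤ) - 1) - 1) ∧
    (v ∉ boundary H →
      (sdim (rootedProd G H v) : ℤ) = n * ((boundary H).ncard : ℤ) - 1) := by
  subst hn
  have hBfin : (boundary H).Finite := Set.toFinite _
  obtain ⟨u, w, hu, hw, huw⟩ := boundary_nontrivial hH hHn
  constructor
  · intro hv
    have hD : ((boundary H) \ {v}).Nonempty := by
      by_cases huv : u = v
      · exact ⟨w, hw, by simp [← huv, Ne.symm huw]⟩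
      · exact ⟨u, hu, by simp [huv]⟩
    have hs := sdim_prod hG hH h2 hbs hD
    have hBc : ((boundary H) \ {v}).ncard = (boundary H).ncard - 1 :=
      Set.ncard_diff_singleton_of_mem hv
    have hB1 : 1 ≤ (boundary H).ncard := (Set.ncard_pos hBfin).mpr ⟨v, hv⟩
    have hD1 : 1 ≤ ((boundary H) \ {v}).ncard := (Set.ncard_pos (Set.toFinite _)).mpr hD
    have h1 : 1 ≤ Fintype.card α * ((boundary H).ncard - 1) :=
      Nat.one_le_iff_ne_zero.mpr (Nat.mul_ne_zero (by omega) (by omega))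
    rw [hs, hBc, Nat.cast_sub h1, Nat.cast_mul, Nat.cast_sub hB1]
    push_cast
    ring
  · intro hv
    have hDeq : (boundary H) \ {v} = boundary H := Set.diff_singleton_eq_self hv
    have hD : ((boundary H) \ {v}).Nonempty := by rw [hDeq]; exact ⟨u, hu⟩
    have hs := sdim_prod hG hH h2 hbs hD
    have hB1 : 1 ≤ (boundary H).ncard := (Set.ncard_pos hBfin).mpr ⟨u, hu⟩
    have h1 : 1 ≤ Fintype.card α * (boundary H).ncard :=
      Nat.one_le_iff_ne_zero.mpr (Nat.mul_ne_zero (by omega) (by omega))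
    rw [hs, hDeq, Nat.cast_sub h1, Nat.cast_mul]
    push_cast
    ring

end RootedStrong
end

section
/- Let G be a connected graph of order n ≥ 2 and let H be a connected graph. If v is a vertex of H with v ∉ ∂(H) and there exists a vertex of H different from v, of degree one in H, that does not belong to any strong metric basis of H, then dim_s(G∘_v H) ≥ n(dim_s(H) + 1) − 1. -/
namespace RootedStrong

variable {V : Type*}

section Aux

open SimpleGraph

variable {W : Type*}

lemma eq_of_maxDistant_of_between {K : SimpleGraph W} (hK : K.Connected) {u v z : W}
    (hmd : MaxDistant K v u) (h : K.dist z u = K.dist z v + K.dist v u) : z = v := by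
  by_contra hzv
  obtain ⟨q, hq⟩ := (hK v z).exists_walk_length_eq_dist
  cases q with
  | nil => exact hzv rfl
  | cons hadj q' =>
    rename_i y
    rw [SimpleGraph.Walk.length_cons] at hq
    have h1 : K.dist y z ≤ q'.length := SimpleGraph.dist_le q'
    have h2 : K.dist u y ≤ K.dist v u := hmd y hadj
    have h3 : K.dist z u ≤ K.dist z y + K.dist y u := hK.dist_triangle
    have h4 : K.dist z y = K.dist y z := SimpleGraph.dist_comm
    have h5 : K.dist y u = K.dist u y := SimpleGraph.dist_comm
    have h6 : K.dist z v = K.dist v z := SimpleGraph.dist_comm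
    omega

lemma resolver_mem_of_mmd {K : SimpleGraph W} (hK : K.Connected) {u v z : W}
    (hmmd : MMD K u v) (hz : StronglyResolves K z u v) : z = u ∨ z = v := by
  rcases hz with h | h
  · exact Or.inr (eq_of_maxDistant_of_between hK hmmd.2 h)
  · exact Or.inl (eq_of_maxDistant_of_between hK hmmd.1 h)

lemma maxDistant_of_unique_nbr {K : SimpleGraph W} (hK : K.Connected) {u u' : W}
    (hnb : ∀ t, K.Adj u t → t = u') {z : W} (hz : z ≠ u) : MaxDistant K u z := by
  intro t ht
  rw [hnb t ht]
  obtain ⟨q, hq⟩ := (hK u z).exists_walk_length_eq_dist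
  cases q with
  | nil => exact absurd rfl hz
  | cons hadj q' =>
    rename_i y
    have hy : y = u' := hnb y hadj
    rw [SimpleGraph.Walk.length_cons] at hq
    have h1 : K.dist u' z ≤ q'.length := by rw [← hy]; exact SimpleGraph.dist_le q'
    have h2 : K.dist z u' = K.dist u' z := SimpleGraph.dist_comm
    omega

lemma push_lemma {K : SimpleGraph W} [Fintype W] (hK : K.Connected) (x y : W) :
    ∃ x' : W, K.dist y x' = K.dist y x + K.dist x x' ∧ MaxDistant K x' y := by
  classical
  obtain ⟨x', hx'mem, hmax⟩ := Finset.exists_max_image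
    (Finset.univ.filter fun t => K.dist y t = K.dist y x + K.dist x t)
    (fun t => K.dist y t) ⟨x, by simp [SimpleGraph.dist_self]⟩
  rw [Finset.mem_filter] at hx'mem
  refine ⟨x', hx'mem.2, ?_⟩
  intro t ht
  by_contra hgt
  push_neg at hgt
  have hcomm : K.dist x' y = K.dist y x' := SimpleGraph.dist_comm
  have h1 : K.dist y t ≤ K.dist y x' + K.dist x' t := hK.dist_triangle
  have h2 : K.dist x' t = 1 := by rwa [SimpleGraph.dist_eq_one_iff_adj]
  have h3 : K.dist y t ≤ K.dist y x + K.dist x t := hK.dist_triangle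
  have h4 : K.dist x t ≤ K.dist x x' + K.dist x' t := hK.dist_triangle
  have hmem0 := hx'mem.2
  have hmemt : K.dist y t = K.dist y x + K.dist x t := by omega
  have := hmax t (by simp [hmemt])
  omega

lemma maxDistant_trans {K : SimpleGraph W} (hK : K.Connected) {x y y' : W}
    (hmd : MaxDistant K x y) (h : K.dist y' x = K.dist y' y + K.dist y x) :
    MaxDistant K x y' := by
  intro t ht
  have h1 : K.dist y t ≤ K.dist x y := hmd t ht
  have h2 : K.dist y' t ≤ K.dist y' y + K.dist y t := hK.dist_triangle
  have h3 : K.dist x y = K.dist y x := SimpleGraph.dist_comm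
  have h4 : K.dist x y' = K.dist y' x := SimpleGraph.dist_comm
  omega

lemma generator_of_cover {K : SimpleGraph W} [Fintype W] (hK : K.Connected) {S : Set W}
    (hS : ∀ x y : W, x ≠ y → MMD K x y → x ∈ S ∨ y ∈ S) : IsStrongGenerator K S := by
  intro x y hxy
  obtain ⟨x', hx'eq, hx'md⟩ := push_lemma hK x y
  obtain ⟨y', hy'eq, hy'md⟩ := push_lemma hK y x'
  have c1 : K.dist y' x' = K.dist x' y' := SimpleGraph.dist_comm
  have c2 : K.dist y' y = K.dist y y' := SimpleGraph.dist_comm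
  have c3 : K.dist y x' = K.dist x' y := SimpleGraph.dist_comm
  have hx'md' : MaxDistant K x' y' :=
    maxDistant_trans hK hx'md (by omega)
  have hdpos : 0 < K.dist y x := hK.pos_dist_of_ne (Ne.symm hxy)
  have hne : x' ≠ y' := by
    intro hcon
    subst hcon
    have : K.dist x' x' = 0 := SimpleGraph.dist_self
    omega
  rcases hS x' y' hne ⟨hx'md', hy'md⟩ with hmem | hmem
  · refine ⟨x', hmem, Or.inr ?_⟩
    have c4 : K.dist x' x = K.dist x x' := SimpleGraph.dist_comm
    have c5 : K.dist x y = K.dist y x := SimpleGraph.dist_comm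
    omega
  · refine ⟨y', hmem, Or.inl ?_⟩
    have t1 : K.dist x' y' ≤ K.dist x' x + K.dist x y' := hK.dist_triangle
    have t2 : K.dist y' x ≤ K.dist y' y + K.dist y x := hK.dist_triangle
    have c4 : K.dist x' x = K.dist x x' := SimpleGraph.dist_comm
    have c6 : K.dist x y' = K.dist y' x := SimpleGraph.dist_comm
    omega

variable {α β : Type*}

/-- The embedding of a copy of `H` into the rooted product. -/
def copyHom (G : SimpleGraph α) (H : SimpleGraph β) (v : β) (a : α) :
    H →g rootedProd G H v where
  toFun := fun y => (a, y)
  map_rel' := fun h => Or.inl ⟨rfl, h⟩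

/-- The embedding of `G` into the rooted product via the root. -/
def rootHom (G : SimpleGraph α) (H : SimpleGraph β) (v : β) :
    G →g rootedProd G H v where
  toFun := fun u => (u, v)
  map_rel' := fun h => Or.inr ⟨rfl, rfl, h⟩

lemma rp_connected (G : SimpleGraph α) (H : SimpleGraph β) (v : β)
    (hG : G.Connected) (hH : H.Connected) : (rootedProd G H v).Connected := by
  have hα : Nonempty α := hG.nonempty
  have hβ : Nonempty β := hH.nonempty
  refine ⟨fun p q => ?_⟩
  obtain ⟨a, x⟩ := p
  obtain ⟨b, y⟩ := q
  exact (((hH x v).map (copyHom G H v a)).trans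
    ((hG a b).map (rootHom G H v))).trans ((hH v y).map (copyHom G H v b))

lemma dist_le_walk_proj {G : SimpleGraph α} {H : SimpleGraph β} {v : β}
    (hH : H.Connected) {p q : α × β} (Wk : (rootedProd G H v).Walk p q) :
    H.dist p.2 q.2 ≤ Wk.length := by
  induction Wk with
  | nil => simp [SimpleGraph.dist_self]
  | cons h Wk' ih =>
    rename_i s t r
    rw [SimpleGraph.Walk.length_cons]
    rcases h with ⟨h1, h2⟩ | ⟨h1, h2, h3⟩
    · have hd1 : H.dist s.2 t.2 = 1 := SimpleGraph.dist_eq_one_iff_adj.mpr h2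
      have htri : H.dist s.2 r.2 ≤ H.dist s.2 t.2 + H.dist t.2 r.2 := hH.dist_triangle
      omega
    · rw [h2] at ih
      rw [h1]
      omega

lemma rp_dist_copy {G : SimpleGraph α} {H : SimpleGraph β} {v : β}
    (hG : G.Connected) (hH : H.Connected) (a : α) (x y : β) :
    (rootedProd G H v).dist (a, x) (a, y) = H.dist x y := by
  have hc := rp_connected G H v hG hH
  apply le_antisymm
  · obtain ⟨p, hp⟩ := (hH x y).exists_walk_length_eq_dist
    have := SimpleGraph.dist_le (p.map (copyHom G H v a))
    rwa [SimpleGraph.Walk.length_map, hp] at this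
  · obtain ⟨q, hq⟩ := (hc ((a, x)) ((a, y))).exists_walk_length_eq_dist
    have := dist_le_walk_proj (G := G) (v := v) hH q
    simpa [hq] using this

lemma mmd_copy {G : SimpleGraph α} {H : SimpleGraph β} {v : β}
    (hG : G.Connected) (hH : H.Connected) {x y : β}
    (hxy : MMD H x y) (hx : x ≠ v) (hy : y ≠ v) (a : α) :
    MMD (rootedProd G H v) (a, x) (a, y) := by
  have key : ∀ x y : β, MaxDistant H x y → x ≠ v →
      MaxDistant (rootedProd G H v) (a, x) (a, y) := by
    intro x y hmd hxv
    rintro ⟨t1, t2⟩ (⟨h1, h2⟩ | ⟨h1, _, _⟩)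
    · simp only at h1 h2
      subst h1
      rw [rp_dist_copy hG hH, rp_dist_copy hG hH]
      exact hmd t2 h2
    · exact absurd h1 hxv
  exact ⟨key x y hxy.1 hx, key y x hxy.2 hy⟩

end Aux

theorem statement18 {α β : Type*} [Fintype α] [Fintype β]
    (G : SimpleGraph α) (H : SimpleGraph β)
    (hG : G.Connected) (hH : H.Connected)
    {n : ℕ} (hn : Fintype.card α = n) (h2 : 2 ≤ n)
    (v : β) (hv : v ∉ boundary H)
    (hw : ∃ w : β, w ≠ v ∧ (H.neighborSet w).ncard = 1 ∧
      ∀ S : Finset β, IsStrongBasis H S → w ∉ S) :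
    n * (sdim H + 1) - 1 ≤ sdim (rootedProd G H v) := by
  classical
  obtain ⟨w, hwv, hwdeg, hwbasis⟩ := hw
  have hKc : (rootedProd G H v).Connected := rp_connected G H v hG hH
  set K := rootedProd G H v with hKdef
  obtain ⟨w', hw'⟩ := Set.ncard_eq_one.mp hwdeg
  have hnbw : ∀ t, H.Adj w t → t = w' := by
    intro t ht
    have h : t ∈ H.neighborSet w := ht
    rw [hw'] at h
    exact h
  have hnbK : ∀ (a : α) (t : α × β), K.Adj (a, w) t → t = (a, w') := by
    rintro a ⟨t1, t2⟩ (⟨h1, h2⟩ | ⟨h1, h2, h3⟩)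
    · simp only at h1 h2
      rw [← h1, hnbw t2 h2]
    · exact absurd h1 hwv
  have hnonempty : ((Finset.univ : Finset (α × β)).card) ∈
      {m | ∃ S : Finset (α × β), S.card = m ∧ IsStrongGenerator K (S : Set (α × β))} :=
    ⟨Finset.univ, rfl, fun p q hpq =>
      ⟨p, by simp, Or.inr (by rw [SimpleGraph.dist_self, Nat.zero_add])⟩⟩
  refine le_csInf ⟨_, hnonempty⟩ ?_
  rintro m ⟨S, rfl, hSgen⟩
  set d := sdim H with hd
  have hcard : S.card = ∑ a : α, (S.filter fun s => s.1 = a).card :=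
    Finset.card_eq_sum_card_fiberwise (fun x _ => Finset.mem_univ x.1)
  set T : α → Finset β := fun a => (S.filter fun s => s.1 = a).image Prod.snd with hT
  have hTgen : ∀ a, IsStrongGenerator H (T a : Set β) := by
    intro a
    apply generator_of_cover hH
    intro x y hxy hmmd
    have hxv : x ≠ v := by rintro rfl; exact hv ⟨y, hmmd⟩
    have hyv : y ≠ v := by rintro rfl; exact hv ⟨x, hmmd.2, hmmd.1⟩
    have hKmmd : MMD K (a, x) (a, y) := mmd_copy hG hH hmmd hxv hyv a
    have hne : ((a, x) : α × β) ≠ (a, y) := by simp [hxy]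
    obtain ⟨z, hzS, hzres⟩ := hSgen _ _ hne
    rcases resolver_mem_of_mmd hKc hKmmd hzres with rfl | rfl
    · exact Or.inl (Finset.mem_coe.mpr (Finset.mem_image.mpr
        ⟨(a, x), Finset.mem_filter.mpr ⟨Finset.mem_coe.mp hzS, rfl⟩, rfl⟩))
    · exact Or.inr (Finset.mem_coe.mpr (Finset.mem_image.mpr
        ⟨(a, y), Finset.mem_filter.mpr ⟨Finset.mem_coe.mp hzS, rfl⟩, rfl⟩))
  have hTd : ∀ a, d ≤ (T a).card := fun a => Nat.sInf_le ⟨T a, rfl, hTgen a⟩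
  have hleaf : ∀ a b : α, a ≠ b → ((a, w) ∈ S ∨ (b, w) ∈ S) := by
    intro a b hab
    have h1 : ((a, w) : α × β) ≠ (b, w) := by simp [hab]
    have hmmd : MMD K (a, w) (b, w) :=
      ⟨maxDistant_of_unique_nbr hKc (hnbK a) h1.symm,
       maxDistant_of_unique_nbr hKc (hnbK b) h1⟩
    obtain ⟨z, hzS, hzres⟩ := hSgen _ _ h1
    rcases resolver_mem_of_mmd hKc hmmd hzres with rfl | rfl
    · exact Or.inl (Finset.mem_coe.mp hzS)
    · exact Or.inr (Finset.mem_coe.mp hzS)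
  set P : α → Prop := fun a => (a, w) ∈ S with hP
  have hPcard : n - 1 ≤ (Finset.univ.filter P).card := by
    have hco : (Finset.univ.filter fun a => ¬ P a).card ≤ 1 := by
      refine Finset.card_le_one.mpr ?_
      intro a ha b hb
      simp only [Finset.mem_filter] at ha hb
      by_contra hab
      rcases hleaf a b hab with h | h
      · exact ha.2 h
      · exact hb.2 h
    have hsplitc := Finset.card_filter_add_card_filter_not
      (s := (Finset.univ : Finset α)) (p := P)
    have hu : (Finset.univ : Finset α).card = n := by rw [Finset.card_univ, hn]
    omega
  have hW1 : ∀ a, P a → d + 1 ≤ (T a).card := by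
    intro a ha
    by_contra hle
    push_neg at hle
    have hcardeq : (T a).card = d := le_antisymm (by omega) (hTd a)
    have hbasis : IsStrongBasis H (T a) := ⟨hTgen a, hcardeq⟩
    exact hwbasis (T a) hbasis (Finset.mem_image.mpr
      ⟨(a, w), Finset.mem_filter.mpr ⟨ha, rfl⟩, rfl⟩)
  have hsum1 : ∑ a : α, (T a).card ≤ S.card := by
    rw [hcard]
    exact Finset.sum_le_sum (fun a _ => Finset.card_image_le)
  have hsplit := Finset.sum_filter_add_sum_filter_not Finset.univ P (fun a => (T a).card)
  have hs1 : (Finset.univ.filter P).card * (d + 1) ≤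
      ∑ a ∈ Finset.univ.filter P, (T a).card := by
    have := Finset.card_nsmul_le_sum (Finset.univ.filter P) (fun a => (T a).card) (d + 1)
      (fun x hx => hW1 x (Finset.mem_filter.mp hx).2)
    simpa [smul_eq_mul] using this
  have hs2 : (Finset.univ.filter fun a => ¬ P a).card * d ≤
      ∑ a ∈ Finset.univ.filter (fun a => ¬ P a), (T a).card := by
    have := Finset.card_nsmul_le_sum (Finset.univ.filter fun a => ¬ P a)
      (fun a => (T a).card) d (fun x _ => hTd x)
    simpa [smul_eq_mul] using this
  have hcnt : (Finset.univ.filter P).card + (Finset.univ.filter fun a => ¬ P a).card = n := by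
    have := Finset.card_filter_add_card_filter_not
      (s := (Finset.univ : Finset α)) (p := P)
    rw [Finset.card_univ, hn] at this
    exact this
  have hkey : (Finset.univ.filter P).card * (d + 1) +
      (Finset.univ.filter fun a => ¬ P a).card * d
      = n * d + (Finset.univ.filter P).card := by
    rw [← hcnt]; ring
  have hfinal : n * d + (Finset.univ.filter P).card ≤ S.card :=
    calc n * d + (Finset.univ.filter P).card
        = (Finset.univ.filter P).card * (d + 1) +
          (Finset.univ.filter fun a => ¬ P a).card * d := hkey.symm
      _ ≤ (∑ a ∈ Finset.univ.filter P, (T a).card) +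
          ∑ a ∈ Finset.univ.filter (fun a => ¬ P a), (T a).card := add_le_add hs1 hs2
      _ = ∑ a : α, (T a).card := hsplit
      _ ≤ S.card := hsum1
  rw [Nat.mul_add, Nat.mul_one]
  set D := n * d with hD
  omega


end RootedStrong
end
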